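/- Let G be a compact connected Lie group with normalized Haar measure, T ⊆ G a closed subgroup, and χ_λ : T → U(1) a continuous character of T. Define Γ(L_λ) = { f ∈ L²(G; ℂ) : f(gt) = χ_λ(t)⁻¹ f(g) for all t ∈ T and almost all g ∈ G }. Then Γ(L_λ) is a closed subspace of L²(G; ℂ) invariant under left translation by G, and for every irreducible finite-dimensional continuous unitary representation V_i of G, the multiplicity of V_i in Γ(L_λ) under the left translation action equals the dimension of the subspace { β ∈ V_i* : t · β = χ_λ(t) β for all t ∈ T }, i.e., equals dim (V_i* ⊗ ℂ_λ)^T. -/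

import Mathlib

open MeasureTheory

open Filter

open scoped ComplexConjugate ENNReal

local notation "⟪" x ", " y "⟫" => @inner ℂ _ _ x y

noncomputable section PrequantAux

/-- Composing an a.e.-equality with a measure preserving map. -/
theorem prequant_aeeq_comp {α : Type*} [MeasurableSpace α] {ν : Measure α} {ψ : α → α}
    (hψ : MeasurePreserving ψ ν ν) {f h : α → ℂ} (hf : f =ᵐ[ν] h) :
    (fun x => f (ψ x)) =ᵐ[ν] fun x => h (ψ x) :=
  hf.comp_tendsto hψ.quasiMeasurePreserving.tendsto_ae

/-- Coercion of a finite sum in `Lp`. -/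
theorem prequant_Lp_coeFn_sum {α : Type*} [MeasurableSpace α] {ν : Measure α} {ι : Type*}
    (s : Finset ι) (f : ι → Lp ℂ 2 ν) :
    ⇑(∑ i ∈ s, f i) =ᵐ[ν] fun g => ∑ i ∈ s, f i g := by
  classical
  induction s using Finset.induction_on with
  | empty => simp only [Finset.sum_empty]; exact Lp.coeFn_zero ℂ 2 ν
  | @insert a s ha ih =>
    rw [Finset.sum_insert ha]
    filter_upwards [Lp.coeFn_add (f a) (∑ i ∈ s, f i), ih] with g h1 h2
    simp only [Finset.sum_insert ha, h1, Pi.add_apply, h2]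

variable {G : Type} [Group G] [TopologicalSpace G] [IsTopologicalGroup G]
  [CompactSpace G] [T2Space G] [MeasurableSpace G] [BorelSpace G]

variable (μ : Measure G) [IsFiniteMeasure μ]
variable (V : Type) [NormedAddCommGroup V] [InnerProductSpace ℂ V] [FiniteDimensional ℂ V]
variable (π : G →* (V ≃ₗᵢ[ℂ] V))

/-- The continuous function `g ↦ β (π g⁻¹ v)`. -/
def indC (hπcont : ∀ v : V, Continuous fun g => π g v) (β : Module.Dual ℂ V) (v : V) :
    C(G, ℂ) where
  toFun g := β ((π g⁻¹) v)
  continuous_toFun := by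
    have h1 : Continuous fun g : G => (π g⁻¹) v := (hπcont v).comp continuous_inv
    exact (LinearMap.continuous_of_finiteDimensional β).comp h1

@[simp] theorem indC_apply (hπcont : ∀ v : V, Continuous fun g => π g v)
    (β : Module.Dual ℂ V) (v : V) (g : G) :
    indC V π hπcont β v g = β ((π g⁻¹) v) := rfl

theorem indC_add_right (hπcont : ∀ v : V, Continuous fun g => π g v)
    (β : Module.Dual ℂ V) (v w : V) :
    indC V π hπcont β (v + w) = indC V π hπcont β v + indC V π hπcont β w := by
  ext g
  simp [map_add]

theorem indC_smul_right (hπcont : ∀ v : V, Continuous fun g => π g v)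
    (β : Module.Dual ℂ V) (c : ℂ) (v : V) :
    indC V π hπcont β (c • v) = c • indC V π hπcont β v := by
  ext g
  simp

theorem indC_add_left (hπcont : ∀ v : V, Continuous fun g => π g v)
    (β₁ β₂ : Module.Dual ℂ V) (v : V) :
    indC V π hπcont (β₁ + β₂) v = indC V π hπcont β₁ v + indC V π hπcont β₂ v := by
  ext g
  simp

theorem indC_smul_left (hπcont : ∀ v : V, Continuous fun g => π g v)
    (c : ℂ) (β : Module.Dual ℂ V) (v : V) :
    indC V π hπcont (c • β) v = c • indC V π hπcont β v := by
  ext g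
  simp

/-- The induced map `β ↦ (v ↦ (g ↦ β (π g⁻¹ v)))` into `L²`. -/
def indHom (hπcont : ∀ v : V, Continuous fun g => π g v) :
    Module.Dual ℂ V →ₗ[ℂ] (V →ₗ[ℂ] Lp ℂ 2 μ) where
  toFun β :=
    { toFun := fun v => ContinuousMap.toLp (E := ℂ) 2 μ ℂ (indC V π hπcont β v)
      map_add' := fun v w => by
        show ContinuousMap.toLp (E := ℂ) 2 μ ℂ (indC V π hπcont β (v + w)) =
          ContinuousMap.toLp (E := ℂ) 2 μ ℂ (indC V π hπcont β v) +
            ContinuousMap.toLp (E := ℂ) 2 μ ℂ (indC V π hπcont β w)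
        rw [indC_add_right, map_add]
      map_smul' := fun c v => by
        show ContinuousMap.toLp (E := ℂ) 2 μ ℂ (indC V π hπcont β (c • v)) =
          c • ContinuousMap.toLp (E := ℂ) 2 μ ℂ (indC V π hπcont β v)
        rw [indC_smul_right, _root_.map_smul] }
  map_add' := fun β₁ β₂ => by
    refine LinearMap.ext fun v => ?_
    show ContinuousMap.toLp (E := ℂ) 2 μ ℂ (indC V π hπcont (β₁ + β₂) v) =
      ContinuousMap.toLp (E := ℂ) 2 μ ℂ (indC V π hπcont β₁ v) +
        ContinuousMap.toLp (E := ℂ) 2 μ ℂ (indC V π hπcont β₂ v)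
    rw [indC_add_left, map_add]
  map_smul' := fun c β => by
    refine LinearMap.ext fun v => ?_
    show ContinuousMap.toLp (E := ℂ) 2 μ ℂ (indC V π hπcont (c • β) v) =
      c • ContinuousMap.toLp (E := ℂ) 2 μ ℂ (indC V π hπcont β v)
    rw [indC_smul_left, _root_.map_smul]

theorem indHom_apply_coeFn (hπcont : ∀ v : V, Continuous fun g => π g v)
    (β : Module.Dual ℂ V) (v : V) :
    ⇑(indHom μ V π hπcont β v) =ᵐ[μ] fun g => β ((π g⁻¹) v) :=
  ContinuousMap.coeFn_toLp (E := ℂ) (p := 2) (𝕜 := ℂ) μ (indC V π hπcont β v)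

/-- Ergodicity of translation: an `L²` vector invariant under all left translations is a
constant multiple of the constant function. -/
theorem prequant_invariant_const (μ : Measure G) [μ.IsHaarMeasure] [IsProbabilityMeasure μ]
    [μ.IsMulRightInvariant] (F : Lp ℂ 2 μ)
    (hinv : ∀ a : G,
      Lp.compMeasurePreservingₗᵢ (E := ℂ) (p := 2) ℂ (fun g => a * g)
        (measurePreserving_mul_left μ a) F = F) :
    ∃ m : ℂ, F = m • ContinuousMap.toLp (E := ℂ) 2 μ ℂ (ContinuousMap.const G 1) := by
  set o : Lp ℂ 2 μ := ContinuousMap.toLp (E := ℂ) 2 μ ℂ (ContinuousMap.const G 1) with ho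
  have key : ∀ c : C(G, ℂ),
      ⟪F, ContinuousMap.toLp (E := ℂ) 2 μ ℂ c⟫ = (∫ g, c g ∂μ) * ⟪F, o⟫ := by
    intro c
    set ψ : C(G × G, ℂ) := c.comp ⟨fun p : G × G => p.1 * p.2, continuous_mul⟩ with hψdef
    set O : C(G, C(G, ℂ)) := ψ.curry with hOdef
    have hOapp : ∀ b g : G, O b g = c (b * g) := fun b g => rfl
    letI : MeasurableSpace C(G, ℂ) := borel _
    haveI : BorelSpace C(G, ℂ) := ⟨rfl⟩
    have hOsm : StronglyMeasurable fun b : G => O b := by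
      rw [stronglyMeasurable_iff_measurable_separable]
      exact ⟨O.continuous.measurable, (isCompact_range O.continuous).isSeparable⟩
    have hOint : Integrable (fun b : G => O b) μ := by
      refine ⟨hOsm.aestronglyMeasurable, HasFiniteIntegral.of_bounded (C := ‖c‖) ?_⟩
      refine Eventually.of_forall fun b => ?_
      refine (ContinuousMap.norm_le _ (norm_nonneg c)).mpr fun g => ?_
      rw [hOapp]
      exact c.norm_coe_le_norm (b * g)
    set Qc : C(G, ℂ) := ∫ b, O b ∂μ with hQcdef
    have hQc_eq : Qc = ContinuousMap.const G (∫ g, c g ∂μ) := by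
      ext g
      have h1 := (ContinuousMap.evalCLM ℂ g).integral_comp_comm hOint
      have h2 : ∀ b : G, (ContinuousMap.evalCLM ℂ g) (O b) = c (b * g) := fun b => rfl
      have h3 : Qc g = (ContinuousMap.evalCLM ℂ g) Qc := rfl
      rw [h3, hQcdef, ← h1]
      calc ∫ b, (ContinuousMap.evalCLM ℂ g) (O b) ∂μ
          = ∫ b, c (b * g) ∂μ := integral_congr_ae (Eventually.of_forall h2)
        _ = ∫ b, c b ∂μ := integral_mul_right_eq_self (fun b => c b) g
        _ = ContinuousMap.const G (∫ g', c g' ∂μ) g := rfl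
    have hlin := ((innerSL ℂ F).comp
      (ContinuousMap.toLp (E := ℂ) 2 μ ℂ (α := G))).integral_comp_comm hOint
    have h3 : ∀ b : G, ContinuousMap.toLp (E := ℂ) 2 μ ℂ (O b)
        = Lp.compMeasurePreservingₗᵢ (E := ℂ) (p := 2) ℂ (fun g => b * g)
            (measurePreserving_mul_left μ b) (ContinuousMap.toLp (E := ℂ) 2 μ ℂ c) := by
      intro b
      apply Lp.ext
      have e1 := ContinuousMap.coeFn_toLp (E := ℂ) (p := 2) (𝕜 := ℂ) μ (O b)
      have e2 := Lp.coeFn_compMeasurePreserving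
        (ContinuousMap.toLp (E := ℂ) 2 μ ℂ c) (measurePreserving_mul_left μ b)
      have e3 := prequant_aeeq_comp (measurePreserving_mul_left μ b)
        (ContinuousMap.coeFn_toLp (E := ℂ) (p := 2) (𝕜 := ℂ) μ c)
      filter_upwards [e1, e2, e3] with g hg1 hg2 hg3
      show (ContinuousMap.toLp (E := ℂ) 2 μ ℂ (O b)) g
        = (Lp.compMeasurePreserving (fun g => b * g) (measurePreserving_mul_left μ b)
            (ContinuousMap.toLp (E := ℂ) 2 μ ℂ c)) g
      rw [hg1, hg2]
      show O b g = (ContinuousMap.toLp (E := ℂ) 2 μ ℂ c) (b * g)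
      rw [hOapp, hg3]
    have h4 : ∀ b : G, ⟪F, ContinuousMap.toLp (E := ℂ) 2 μ ℂ (O b)⟫
        = ⟪F, ContinuousMap.toLp (E := ℂ) 2 μ ℂ c⟫ := by
      intro b
      rw [h3 b]
      calc ⟪F, Lp.compMeasurePreservingₗᵢ (E := ℂ) (p := 2) ℂ (fun g => b * g)
              (measurePreserving_mul_left μ b) (ContinuousMap.toLp (E := ℂ) 2 μ ℂ c)⟫
          = ⟪Lp.compMeasurePreservingₗᵢ (E := ℂ) (p := 2) ℂ (fun g => b * g)
              (measurePreserving_mul_left μ b) F,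
            Lp.compMeasurePreservingₗᵢ (E := ℂ) (p := 2) ℂ (fun g => b * g)
              (measurePreserving_mul_left μ b) (ContinuousMap.toLp (E := ℂ) 2 μ ℂ c)⟫ := by
            rw [hinv b]
        _ = ⟪F, ContinuousMap.toLp (E := ℂ) 2 μ ℂ c⟫ :=
            LinearIsometry.inner_map_map _ _ _
    have h5 : ∫ b, ⟪F, ContinuousMap.toLp (E := ℂ) 2 μ ℂ (O b)⟫ ∂μ
        = ⟪F, ContinuousMap.toLp (E := ℂ) 2 μ ℂ c⟫ := by
      rw [integral_congr_ae (Eventually.of_forall h4), integral_const]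
      simp
    have h6 : ∫ b, ⟪F, ContinuousMap.toLp (E := ℂ) 2 μ ℂ (O b)⟫ ∂μ
        = ⟪F, ContinuousMap.toLp (E := ℂ) 2 μ ℂ Qc⟫ := by
      have h7 : ∀ b : G, ⟪F, ContinuousMap.toLp (E := ℂ) 2 μ ℂ (O b)⟫
          = ((innerSL ℂ F).comp (ContinuousMap.toLp (E := ℂ) 2 μ ℂ (α := G))) (O b) := by
        intro b; rfl
      rw [integral_congr_ae (Eventually.of_forall h7), hlin]
      rfl
    have h8 : ⟪F, ContinuousMap.toLp (E := ℂ) 2 μ ℂ Qc⟫ = (∫ g, c g ∂μ) * ⟪F, o⟫ := by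
      rw [hQc_eq]
      have hconst : ContinuousMap.const G (∫ g, c g ∂μ)
          = (∫ g, c g ∂μ) • ContinuousMap.const G (1 : ℂ) := by
        ext x; simp
      rw [hconst, _root_.map_smul, ← ho, inner_smul_right]
    rw [← h5, h6, h8]
  refine ⟨conj ⟪F, o⟫, ?_⟩
  have hinner_o : ∀ c : C(G, ℂ), ⟪o, ContinuousMap.toLp (E := ℂ) 2 μ ℂ c⟫ = ∫ g, c g ∂μ := by
    intro c
    rw [L2.inner_def]
    have e1 : ⇑o =ᵐ[μ] fun _ => (1 : ℂ) := by
      rw [ho]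
      exact ContinuousMap.coeFn_toLp (E := ℂ) (p := 2) (𝕜 := ℂ) μ (ContinuousMap.const G (1 : ℂ))
    have e2 := ContinuousMap.coeFn_toLp (E := ℂ) (p := 2) (𝕜 := ℂ) μ c
    refine integral_congr_ae ?_
    filter_upwards [e1, e2] with g hg1 hg2
    rw [RCLike.inner_apply, hg1, hg2]
    simp
  have hzero : ∀ c : C(G, ℂ),
      ⟪F - conj ⟪F, o⟫ • o, ContinuousMap.toLp (E := ℂ) 2 μ ℂ c⟫ = 0 := by
    intro c
    rw [inner_sub_left, inner_smul_left, key c, hinner_o c]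
    simp only [Complex.conj_conj]
    ring
  set d : Lp ℂ 2 μ := F - conj ⟪F, o⟫ • o with hd
  have hd0 : d = 0 := by
    have hdense : DenseRange (⇑(ContinuousMap.toLp (E := ℂ) 2 μ ℂ (α := G))) :=
      ContinuousMap.toLp_denseRange (E := ℂ) (μ := μ) (𝕜 := ℂ) ENNReal.ofNat_ne_top
    have hcl : IsClosed {x : Lp ℂ 2 μ | ⟪d, x⟫ = 0} :=
      isClosed_eq (innerSL ℂ d).continuous continuous_const
    have hsub : Set.range (⇑(ContinuousMap.toLp (E := ℂ) 2 μ ℂ (α := G)))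
        ⊆ {x : Lp ℂ 2 μ | ⟪d, x⟫ = 0} := by
      rintro _ ⟨c, rfl⟩
      exact hzero c
    have hmem : d ∈ {x : Lp ℂ 2 μ | ⟪d, x⟫ = 0} := by
      have hcc := hcl.closure_subset_iff.mpr hsub
      refine hcc ?_
      rw [hdense.closure_range]
      trivial
    exact inner_self_eq_zero.mp hmem
  have := sub_eq_zero.mp hd0
  exact this

end PrequantAux

/-!
STATEMENT 1: Let `G` be a compact connected Lie group with normalized Haar measure,
`T ⊆ G` a closed subgroup and `χ_λ : T → U(1)` a continuous character.  Then
`Γ(L_λ) = { f ∈ L²(G;ℂ) : f(gt) = χ_λ(t)⁻¹ f(g) }` is a closed subspace of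
`L²(G;ℂ)`, invariant under left translation by `G`, and for every irreducible
finite-dimensional continuous unitary representation `V_i` of `G` the multiplicity of
`V_i` in `Γ(L_λ)` (the dimension of `Hom_G(V_i, Γ(L_λ))`) equals the dimension of the
subspace `{ β ∈ V_i* : β ∘ π_i(t) = χ_λ(t) β for all t ∈ T }`, i.e. of
`(V_i* ⊗ ℂ_λ)^T`.
-/

set_option maxHeartbeats 2000000 in
theorem prequantization_multiplicities
    (G : Type) [Group G] [TopologicalSpace G] [IsTopologicalGroup G]
    [CompactSpace G] [T2Space G] [ConnectedSpace G] [MeasurableSpace G] [BorelSpace G]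
    (μ : Measure G) [μ.IsHaarMeasure] [IsProbabilityMeasure μ] [μ.IsMulRightInvariant]
    -- a closed subgroup T (in the intended application, a maximal torus):
    (T : Subgroup G) (hT : IsClosed (T : Set G))
    -- a continuous unitary character χ_λ of T:
    (χ : T →* ℂ) (hχcont : Continuous χ) (hχunit : ∀ t : T, ‖χ t‖ = 1)
    -- Γ(L_λ), the subspace of L²(G;ℂ) of f with f(gt) = χ_λ(t)⁻¹ f(g):
    (Γ : Submodule ℂ (Lp ℂ 2 μ))
    (hΓ : ∀ f : Lp ℂ 2 μ, f ∈ Γ ↔ ∀ t : T,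
      (fun g => f (g * (t : G))) =ᵐ[μ] fun g => (χ t)⁻¹ * f g)
    -- an irreducible finite-dimensional continuous unitary representation (π, V) of G:
    (V : Type) [NormedAddCommGroup V] [InnerProductSpace ℂ V] [FiniteDimensional ℂ V]
    [Nontrivial V]
    (π : G →* (V ≃ₗᵢ[ℂ] V)) (hπcont : ∀ v : V, Continuous fun g => π g v)
    (hirr : ∀ U : Submodule ℂ V, (∀ (g : G), ∀ v ∈ U, π g v ∈ U) → U = ⊥ ∨ U = ⊤)
    -- Hom_G(V, Γ(L_λ)): the space of G-equivariant linear maps V → L²(G;ℂ) with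
    -- range contained in Γ(L_λ) (G acting by left translation on functions):
    (HomGΓ : Submodule ℂ (V →ₗ[ℂ] Lp ℂ 2 μ))
    (hHom : ∀ L : V →ₗ[ℂ] Lp ℂ 2 μ, L ∈ HomGΓ ↔
      ((∀ v : V, L v ∈ Γ) ∧
        ∀ (gL : G) (v : V), (fun g => (L v) (gL⁻¹ * g)) =ᵐ[μ] ⇑(L (π gL v))))
    -- the weight subspace (V* ⊗ ℂ_λ)^T = { β ∈ V* : β ∘ π(t) = χ_λ(t)·β ∀ t ∈ T }:
    (Wt : Submodule ℂ (Module.Dual ℂ V))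
    (hWt : ∀ β : Module.Dual ℂ V, β ∈ Wt ↔ ∀ (t : T) (v : V),
      β (π (t : G) v) = χ t * β v) :
    -- Γ(L_λ) is a closed subspace:
    IsClosed (Γ : Set (Lp ℂ 2 μ)) ∧
    -- Γ(L_λ) is invariant under left translation by G:
    (∀ f ∈ Γ, ∀ gL : G, ∀ f' : Lp ℂ 2 μ,
      (⇑f' =ᵐ[μ] fun g => f (gL⁻¹ * g)) → f' ∈ Γ) ∧
    -- the multiplicity of V in Γ(L_λ) equals dim (V* ⊗ ℂ_λ)^T:
    Module.finrank ℂ HomGΓ = Module.finrank ℂ Wt := by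
  classical
  refine ⟨?_, ?_, ?_⟩
  · -- closedness of Γ
    have hset : (Γ : Set (Lp ℂ 2 μ)) =
        ⋂ t : T, {f : Lp ℂ 2 μ |
          Lp.compMeasurePreservingₗᵢ (E := ℂ) (p := 2) ℂ (fun g => g * (t : G))
            (measurePreserving_mul_right μ (t : G)) f - (χ t)⁻¹ • f = 0} := by
      ext f
      simp only [SetLike.mem_coe, hΓ f, Set.mem_iInter, Set.mem_setOf_eq, sub_eq_zero]
      refine forall_congr' fun t => ?_
      constructor
      · intro h
        apply Lp.ext
        filter_upwards [Lp.coeFn_compMeasurePreserving f (measurePreserving_mul_right μ (t : G)),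
          Lp.coeFn_smul ((χ t)⁻¹) f, h] with g h1 h2 h3
        show (Lp.compMeasurePreserving (fun g => g * (t : G))
            (measurePreserving_mul_right μ (t : G)) f) g = ((χ t)⁻¹ • f) g
        rw [h1, h2]
        show f (g * (t : G)) = (χ t)⁻¹ • f g
        rw [h3, smul_eq_mul]
      · intro h
        have hae : ⇑(Lp.compMeasurePreserving (fun g => g * (t : G))
            (measurePreserving_mul_right μ (t : G)) f) =ᵐ[μ] ⇑((χ t)⁻¹ • f) := by
          have h' : Lp.compMeasurePreserving (fun g => g * (t : G))
              (measurePreserving_mul_right μ (t : G)) f = (χ t)⁻¹ • f := h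
          rw [h']
        filter_upwards [Lp.coeFn_compMeasurePreserving f
          (measurePreserving_mul_right μ (t : G)), Lp.coeFn_smul ((χ t)⁻¹) f, hae]
          with g h1 h2 h3
        calc f (g * (t : G))
            = (Lp.compMeasurePreserving (fun g => g * (t : G))
              (measurePreserving_mul_right μ (t : G)) f) g := h1.symm
          _ = ((χ t)⁻¹ • f) g := h3
          _ = (χ t)⁻¹ * f g := by rw [h2]; rfl
    rw [hset]
    refine isClosed_iInter fun t => ?_
    have hc : Continuous fun f : Lp ℂ 2 μ =>
        Lp.compMeasurePreservingₗᵢ (E := ℂ) (p := 2) ℂ (fun g => g * (t : G))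
          (measurePreserving_mul_right μ (t : G)) f - (χ t)⁻¹ • f :=
      ((Lp.compMeasurePreservingₗᵢ (E := ℂ) (p := 2) ℂ (fun g => g * (t : G))
        (measurePreserving_mul_right μ (t : G))).continuous).sub
        (continuous_id.const_smul ((χ t)⁻¹))
    exact isClosed_eq hc continuous_const
  · -- invariance under left translation
    intro f hf gL f' hf'
    rw [hΓ]
    intro t
    have h1 : (fun g => f' (g * (t : G))) =ᵐ[μ] fun g => f (gL⁻¹ * (g * (t : G))) :=
      prequant_aeeq_comp (measurePreserving_mul_right μ (t : G)) hf'
    have h2 : (fun g => f ((gL⁻¹ * g) * (t : G))) =ᵐ[μ]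
        fun g => (χ t)⁻¹ * f (gL⁻¹ * g) :=
      prequant_aeeq_comp (measurePreserving_mul_left μ gL⁻¹) ((hΓ f).mp hf t)
    refine h1.trans ?_
    filter_upwards [h2, hf'] with g hg2 hg'
    calc f (gL⁻¹ * (g * (t : G))) = f ((gL⁻¹ * g) * (t : G)) := by rw [mul_assoc]
      _ = (χ t)⁻¹ * f (gL⁻¹ * g) := hg2
      _ = (χ t)⁻¹ * f' g := by rw [hg']
  · -- multiplicity computation
    have hχinv : ∀ t : T, χ t⁻¹ = (χ t)⁻¹ := by
      intro t
      refine eq_inv_of_mul_eq_one_left ?_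
      rw [← map_mul, inv_mul_cancel, map_one]
    have hχne : ∀ t : T, χ t ≠ 0 := by
      intro t h
      have := hχunit t
      rw [h] at this
      simp at this
    -- the comparison map E : V* → (V →ₗ L²)
    set E : Module.Dual ℂ V →ₗ[ℂ] (V →ₗ[ℂ] Lp ℂ 2 μ) := indHom μ V π hπcont with hE
    have hEcoe : ∀ (β : Module.Dual ℂ V) (v : V),
        ⇑(E β v) =ᵐ[μ] fun g => β ((π g⁻¹) v) := fun β v =>
      indHom_apply_coeFn μ V π hπcont β v
    -- membership of E β in HomGΓ for β ∈ Wt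
    have hmem : ∀ β ∈ Wt, E β ∈ HomGΓ := by
      intro β hβ
      have hβ' := (hWt β).mp hβ
      rw [hHom]
      constructor
      · intro v
        rw [hΓ]
        intro t
        have h1 : (fun g => (E β v) (g * (t : G))) =ᵐ[μ]
            fun g => β ((π (g * (t : G))⁻¹) v) :=
          prequant_aeeq_comp (measurePreserving_mul_right μ (t : G)) (hEcoe β v)
        have h2 : ∀ g : G, β ((π (g * (t : G))⁻¹) v) = (χ t)⁻¹ * β ((π g⁻¹) v) := by
          intro g
          have ha : (g * (t : G))⁻¹ = ((t⁻¹ : T) : G) * g⁻¹ := by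
            rw [mul_inv_rev]
            simp
          rw [ha, map_mul]
          have hb : (π ((t⁻¹ : T) : G) * π g⁻¹) v = π ((t⁻¹ : T) : G) ((π g⁻¹) v) := by
            rw [LinearIsometryEquiv.coe_mul]
            rfl
          rw [hb, hβ' t⁻¹ ((π g⁻¹) v), hχinv t]
        refine h1.trans ?_
        filter_upwards [hEcoe β v] with g hg
        rw [h2 g, hg]
      · intro gL v
        have h1 : (fun g => (E β v) (gL⁻¹ * g)) =ᵐ[μ]
            fun g => β ((π (gL⁻¹ * g)⁻¹) v) :=
          prequant_aeeq_comp (measurePreserving_mul_left μ gL⁻¹) (hEcoe β v)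
        refine h1.trans ?_
        refine EventuallyEq.trans ?_ (hEcoe β (π gL v)).symm
        refine Eventually.of_forall fun g => ?_
        show β ((π (gL⁻¹ * g)⁻¹) v) = β ((π g⁻¹) ((π gL) v))
        have ha : (gL⁻¹ * g)⁻¹ = g⁻¹ * gL := by
          rw [mul_inv_rev, inv_inv]
        rw [ha, map_mul]
        have hb : (π g⁻¹ * π gL) v = π g⁻¹ ((π gL) v) := by
          rw [LinearIsometryEquiv.coe_mul]
          rfl
        rw [hb]
    -- the restricted map e : Wt → HomGΓ
    set e : Wt →ₗ[ℂ] HomGΓ :=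
      LinearMap.codRestrict HomGΓ (E.comp Wt.subtype) (fun b => hmem b.1 b.2) with he
    -- injectivity
    have hinj : Function.Injective e := by
      intro β₁ β₂ h
      have hval : E β₁.1 = E β₂.1 := congrArg Subtype.val h
      apply Subtype.ext
      apply LinearMap.ext
      intro v
      have h1 : ContinuousMap.toLp (E := ℂ) 2 μ ℂ (indC V π hπcont β₁.1 v)
          = ContinuousMap.toLp (E := ℂ) 2 μ ℂ (indC V π hπcont β₂.1 v) :=
        DFunLike.congr_fun hval v
      have h2 : indC V π hπcont β₁.1 v = indC V π hπcont β₂.1 v :=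
        ContinuousMap.toLp_injective (μ := μ) h1
      have h3 := DFunLike.congr_fun h2 (1 : G)
      simpa using h3
    -- surjectivity
    have hsurj : Function.Surjective e := by
      rintro ⟨L, hLmem⟩
      obtain ⟨hL1, hL2⟩ := (hHom L).mp hLmem
      set n := Module.finrank ℂ V with hn
      set es : OrthonormalBasis (Fin n) ℂ V := stdOrthonormalBasis ℂ V with hes
      set φ : Fin n → G → ℂ := fun i => ⇑(L (es i)) with hφ
      -- representation of L in coordinates
      have hrep : ∀ u : V, ⇑(L u) =ᵐ[μ] fun g => ∑ i, ⟪es i, u⟫ * φ i g := by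
        intro u
        have h0 : L u = ∑ i, ⟪es i, u⟫ • L (es i) := by
          conv_lhs => rw [← es.sum_repr' u]
          rw [map_sum]
          simp only [_root_.map_smul]
        rw [h0]
        refine (prequant_Lp_coeFn_sum Finset.univ _).trans ?_
        have h2 : ∀ᵐ g ∂μ, ∀ i : Fin n, (⟪es i, u⟫ • L (es i)) g = ⟪es i, u⟫ * φ i g := by
          rw [ae_all_iff]
          intro i
          filter_upwards [Lp.coeFn_smul (⟪es i, u⟫) (L (es i))] with g hg
          rw [hg]
          simp [hφ, smul_eq_mul]
        filter_upwards [h2] with g hg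
        exact Finset.sum_congr rfl fun i _ => hg i
      -- the invariant vector field components
      set x : Fin n → G → ℂ :=
        fun j g => ∑ i, conj (φ i g) * ⟪es j, (π g⁻¹) (es i)⟫ with hx
      have hφmem : ∀ i, MemLp (φ i) 2 μ := fun i => Lp.memLp _
      have hcont_coef : ∀ (i j : Fin n), Continuous fun g : G => ⟪es j, (π g⁻¹) (es i)⟫ := by
        intro i j
        have h1 : Continuous fun g : G => (π g⁻¹) (es i) :=
          (hπcont (es i)).comp continuous_inv
        exact (continuous_const.inner h1)
      have hxsm : ∀ j, AEStronglyMeasurable (x j) μ := by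
        intro j
        refine Finset.aestronglyMeasurable_fun_sum Finset.univ fun i _ => ?_
        exact ((continuous_star.comp_aestronglyMeasurable
          (hφmem i).aestronglyMeasurable).mul (hcont_coef i j).aestronglyMeasurable)
      have hxmem : ∀ j, MemLp (x j) 2 μ := by
        intro j
        have hxj : x j = ∑ i, fun g => conj (φ i g) * ⟪es j, (π g⁻¹) (es i)⟫ := by
          funext g
          rw [Finset.sum_apply]
        rw [hxj]
        refine memLp_finset_sum' Finset.univ fun i _ => ?_
        refine MemLp.of_le_mul (c := 1) (hφmem i) ?_ ?_
        · exact (continuous_star.comp_aestronglyMeasurable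
            (hφmem i).aestronglyMeasurable).mul (hcont_coef i j).aestronglyMeasurable
        · refine Eventually.of_forall fun g => ?_
          rw [norm_mul, one_mul]
          have h1 : ‖conj (φ i g)‖ = ‖φ i g‖ := by simp
          have h2 : ‖⟪es j, (π g⁻¹) (es i)⟫‖ ≤ 1 := by
            refine le_trans (norm_inner_le_norm _ _) ?_
            simp [LinearIsometryEquiv.norm_map, es.orthonormal.1 i, es.orthonormal.1 j]
          calc ‖conj (φ i g)‖ * ‖⟪es j, (π g⁻¹) (es i)⟫‖
              ≤ ‖conj (φ i g)‖ * 1 := by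
                exact mul_le_mul_of_nonneg_left h2 (norm_nonneg _)
            _ = ‖φ i g‖ := by rw [mul_one, h1]
      -- key equivariance, coordinate form
      have hkey : ∀ (a : G) (i : Fin n),
          (fun g => φ i g) =ᵐ[μ] fun g => ∑ k, ⟪es k, (π a) (es i)⟫ * φ k (a * g) := by
        intro a i
        have h0 := hL2 a (es i)
        have h1 := prequant_aeeq_comp (measurePreserving_mul_left μ a) h0
        have h2 := prequant_aeeq_comp (measurePreserving_mul_left μ a) (hrep ((π a) (es i)))
        have h3 : (fun g => φ i g) =ᵐ[μ] fun g => (L (es i)) (a⁻¹ * (a * g)) := by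
          refine Eventually.of_forall fun g => ?_
          show φ i g = (L (es i)) (a⁻¹ * (a * g))
          rw [inv_mul_cancel_left]
        exact h3.trans (h1.trans h2)
      -- invariance of the components x j
      have hxinv : ∀ (a : G) (j : Fin n), (fun g => x j (a * g)) =ᵐ[μ] x j := by
        intro a j
        have h := ae_all_iff.mpr fun i => hkey a i
        filter_upwards [h] with g hg
        have hsum : ∀ i : Fin n, conj (φ i g)
            = ∑ k, conj ⟪es k, (π a) (es i)⟫ * conj (φ k (a * g)) := by
          intro i
          rw [hg i, map_sum]
          exact Finset.sum_congr rfl fun k _ => by rw [map_mul]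
        have hmain : x j g = x j (a * g) := by
          calc x j g = ∑ i, conj (φ i g) * ⟪es j, (π g⁻¹) (es i)⟫ := rfl
            _ = ∑ i, (∑ k, conj ⟪es k, (π a) (es i)⟫ * conj (φ k (a * g)))
                  * ⟪es j, (π g⁻¹) (es i)⟫ := by
                refine Finset.sum_congr rfl fun i _ => ?_
                rw [← hsum i]
            _ = ∑ k, ∑ i, conj (φ k (a * g)) *
                  (conj ⟪es k, (π a) (es i)⟫ * ⟪es j, (π g⁻¹) (es i)⟫) := by
                rw [Finset.sum_comm]
                refine Finset.sum_congr rfl fun i _ => ?_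
                rw [Finset.sum_mul]
                refine Finset.sum_congr rfl fun k _ => by ring
            _ = ∑ k, conj (φ k (a * g)) *
                  (∑ i, conj ⟪es k, (π a) (es i)⟫ * ⟪es j, (π g⁻¹) (es i)⟫) := by
                refine Finset.sum_congr rfl fun k _ => ?_
                rw [Finset.mul_sum]
            _ = ∑ k, conj (φ k (a * g)) * ⟪es j, (π (a * g)⁻¹) (es k)⟫ := by
                refine Finset.sum_congr rfl fun k _ => ?_
                congr 1
                have hinner : ∀ i : Fin n, conj ⟪es k, (π a) (es i)⟫
                    = ⟪es i, (π a⁻¹) (es k)⟫ := by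
                  intro i
                  rw [inner_conj_symm]
                  have h6 : ⟪(π a) (es i), es k⟫
                      = ⟪(π a⁻¹) ((π a) (es i)), (π a⁻¹) (es k)⟫ :=
                    (LinearIsometryEquiv.inner_map_map (π a⁻¹) _ _).symm
                  rw [h6]
                  congr 1
                  have h7 : (π a⁻¹ * π a) (es i) = (π a⁻¹) ((π a) (es i)) := by
                    rw [LinearIsometryEquiv.coe_mul]; rfl
                  rw [← h7, ← map_mul, inv_mul_cancel, map_one]
                  rfl
                have h8 : (π (a * g)⁻¹) (es k) = (π g⁻¹) ((π a⁻¹) (es k)) := by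
                  rw [mul_inv_rev, map_mul, LinearIsometryEquiv.coe_mul]
                  rfl
                rw [h8]
                conv_rhs => rw [← es.sum_repr' ((π a⁻¹) (es k))]
                rw [map_sum, inner_sum]
                refine Finset.sum_congr rfl fun i _ => ?_
                rw [hinner i, _root_.map_smul, inner_smul_right]
            _ = x j (a * g) := rfl
        exact hmain.symm
      -- pass to Lp and apply the ergodicity lemma
      set F : Fin n → Lp ℂ 2 μ := fun j => (hxmem j).toLp (x j) with hF
      have hFinv : ∀ (a : G) (j : Fin n),
          Lp.compMeasurePreservingₗᵢ (E := ℂ) (p := 2) ℂ (fun g => a * g)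
            (measurePreserving_mul_left μ a) (F j) = F j := by
        intro a j
        apply Lp.ext
        have e1 := Lp.coeFn_compMeasurePreserving (F j) (measurePreserving_mul_left μ a)
        have e2 := prequant_aeeq_comp (measurePreserving_mul_left μ a)
          ((hxmem j).coeFn_toLp)
        filter_upwards [e1, e2, hxinv a j, (hxmem j).coeFn_toLp] with g hg1 hg2 hg3 hg4
        show (Lp.compMeasurePreserving (fun g => a * g)
            (measurePreserving_mul_left μ a) (F j)) g = (F j) g
        rw [hg1]
        show (F j) (a * g) = (F j) g
        rw [hg2, hg3, hg4]
      have hconst : ∀ j : Fin n, ∃ m : ℂ,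
          F j = m • ContinuousMap.toLp (E := ℂ) 2 μ ℂ (ContinuousMap.const G 1) :=
        fun j => prequant_invariant_const μ (F j) (fun a => hFinv a j)
      choose m hm using hconst
      have hx_eq : ∀ j : Fin n, x j =ᵐ[μ] fun _ => m j := by
        intro j
        have e1 : ⇑(F j) =ᵐ[μ] x j := (hxmem j).coeFn_toLp
        have e2 : ⇑(F j) =ᵐ[μ] fun _ => m j := by
          rw [hm j]
          filter_upwards [Lp.coeFn_smul (m j)
            (ContinuousMap.toLp (E := ℂ) 2 μ ℂ (ContinuousMap.const G 1)),
            ContinuousMap.coeFn_toLp (E := ℂ) (p := 2) (𝕜 := ℂ) μ (ContinuousMap.const G (1 : ℂ))]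
            with g hg1 hg2
          rw [hg1]
          show m j • (ContinuousMap.toLp (E := ℂ) 2 μ ℂ (ContinuousMap.const G 1)) g = m j
          rw [hg2]
          simp
        exact e1.symm.trans e2
      -- the constant vector
      set w₀ : V := ∑ j, m j • es j with hw₀
      have hfinal : ∀ u : V, ⇑(L u) =ᵐ[μ] fun g => ⟪w₀, (π g⁻¹) u⟫ := by
        intro u
        refine (hrep u).trans ?_
        have h := ae_all_iff.mpr hx_eq
        filter_upwards [h] with g hg
        have h9 : ∀ y : V, ⟪w₀, y⟫ = ∑ j, conj (m j) * ⟪es j, y⟫ := by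
          intro y
          rw [hw₀, sum_inner]
          exact Finset.sum_congr rfl fun j _ => by rw [inner_smul_left]
        have h10 : ∀ j : Fin n, conj (m j)
            = ∑ i, φ i g * ⟪(π g⁻¹) (es i), es j⟫ := by
          intro j
          rw [← hg j]
          show conj (x j g) = _
          rw [hx]
          rw [map_sum]
          refine Finset.sum_congr rfl fun i _ => ?_
          rw [map_mul, Complex.conj_conj, inner_conj_symm]
        calc ∑ i, ⟪es i, u⟫ * φ i g
            = ∑ i, φ i g * ⟪(π g⁻¹) (es i), (π g⁻¹) u⟫ := by
              refine Finset.sum_congr rfl fun i _ => ?_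
              rw [LinearIsometryEquiv.inner_map_map]
              ring
          _ = ∑ i, φ i g * ∑ j, ⟪(π g⁻¹) (es i), es j⟫ * ⟪es j, (π g⁻¹) u⟫ := by
              refine Finset.sum_congr rfl fun i _ => ?_
              congr 1
              conv_lhs => rw [← es.sum_repr' ((π g⁻¹) u)]
              rw [inner_sum]
              refine Finset.sum_congr rfl fun j _ => ?_
              rw [inner_smul_right]
              ring
          _ = ∑ i, ∑ j, φ i g * (⟪(π g⁻¹) (es i), es j⟫ * ⟪es j, (π g⁻¹) u⟫) := by
              refine Finset.sum_congr rfl fun i _ => ?_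
              rw [Finset.mul_sum]
          _ = ∑ j, ∑ i, φ i g * (⟪(π g⁻¹) (es i), es j⟫ * ⟪es j, (π g⁻¹) u⟫) :=
              Finset.sum_comm
          _ = ∑ j, (∑ i, φ i g * ⟪(π g⁻¹) (es i), es j⟫) * ⟪es j, (π g⁻¹) u⟫ := by
              refine Finset.sum_congr rfl fun j _ => ?_
              rw [Finset.sum_mul]
              exact Finset.sum_congr rfl fun i _ => by ring
          _ = ∑ j, conj (m j) * ⟪es j, (π g⁻¹) u⟫ := by
              refine Finset.sum_congr rfl fun j _ => ?_
              rw [← h10 j]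
          _ = ⟪w₀, (π g⁻¹) u⟫ := (h9 _).symm
      -- the corresponding functional
      set β₀ : Module.Dual ℂ V := ((innerSL ℂ w₀).toLinearMap : V →ₗ[ℂ] ℂ) with hβ₀
      have hEL : E β₀ = L := by
        apply LinearMap.ext
        intro u
        apply Lp.ext
        refine (hEcoe β₀ u).trans (hfinal u).symm
      have hβ₀apply : ∀ y : V, β₀ y = ⟪w₀, y⟫ := fun y => rfl
      have hβWt : β₀ ∈ Wt := by
        rw [hWt]
        intro t v
        set u : V := (π (t : G)) v with hu
        -- use the Γ-condition for L at the vector u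
        have hcond := (hΓ (L u)).mp (hL1 u) t
        have h1 : (fun g => (L u) (g * (t : G))) =ᵐ[μ]
            fun g => ⟪w₀, (π (g * (t : G))⁻¹) u⟫ :=
          prequant_aeeq_comp (measurePreserving_mul_right μ (t : G)) (hfinal u)
        have h2 : (fun g => (χ t)⁻¹ * (L u) g) =ᵐ[μ]
            fun g => (χ t)⁻¹ * ⟪w₀, (π g⁻¹) u⟫ := by
          filter_upwards [hfinal u] with g hg
          rw [hg]
        have h3 : (fun g : G => ⟪w₀, (π (g * (t : G))⁻¹) u⟫) =ᵐ[μ]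
            fun g => (χ t)⁻¹ * ⟪w₀, (π g⁻¹) u⟫ :=
          h1.symm.trans (hcond.trans h2)
        have hc1 : Continuous fun g : G => ⟪w₀, (π (g * (t : G))⁻¹) u⟫ := by
          have hca : Continuous fun g : G => (π (g * (t : G))⁻¹) u := by
            have hmul : Continuous fun g : G => (g * (t : G))⁻¹ :=
              (continuous_id.mul continuous_const).inv
            exact (hπcont u).comp hmul
          exact continuous_const.inner hca
        have hc2 : Continuous fun g : G => (χ t)⁻¹ * ⟪w₀, (π g⁻¹) u⟫ := by
          have hcb : Continuous fun g : G => (π g⁻¹) u := (hπcont u).comp continuous_inv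
          exact continuous_const.mul (continuous_const.inner hcb)
        have heq : (fun g : G => ⟪w₀, (π (g * (t : G))⁻¹) u⟫)
            = fun g => (χ t)⁻¹ * ⟪w₀, (π g⁻¹) u⟫ :=
          (Continuous.ae_eq_iff_eq μ hc1 hc2).mp h3
        have hat := congrFun heq 1
        have h4 : (π ((1 : G) * (t : G))⁻¹) u = v := by
          rw [one_mul, hu]
          have h5 : (π ((t : G))⁻¹ * π (t : G)) v = (π ((t : G))⁻¹) ((π (t : G)) v) := by
            rw [LinearIsometryEquiv.coe_mul]; rfl
          rw [← h5, ← map_mul, inv_mul_cancel, map_one]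
          rfl
        have h6 : (π ((1 : G))⁻¹) u = u := by
          rw [inv_one, map_one]
          rfl
        rw [h4, h6] at hat
        -- hat : ⟪w₀, v⟫ = (χ t)⁻¹ * ⟪w₀, u⟫
        rw [hβ₀apply, hβ₀apply, hat, ← mul_assoc, mul_inv_cancel₀ (hχne t), one_mul]
      exact ⟨⟨β₀, hβWt⟩, Subtype.ext hEL⟩
    -- conclusion
    exact (LinearEquiv.ofBijective e ⟨hinj, hsurj⟩).finrank_eq.symm
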